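/- Let q : ℝ → ℝ satisfy (A1) q(0) = q(1) = 0, (A2) q is twice differentiable on [0,1], and (A3) q is strictly concave on [0,1]. Then the function π(u) = q(u)/(1 + q(u)) also satisfies (A1), (A2) and (A3); that is, π(0) = π(1) = 0, π is twice differentiable on [0,1], and π is strictly concave on [0,1]. -/

import Mathlib

private lemma deriv_pi_eq_aux (q Pi : ℝ → ℝ) (hπ : ∀ u, Pi u = q u / (1 + q u)) (x : ℝ)
    (hq : DifferentiableAt ℝ q x) (hne : 1 + q x ≠ 0) :
    deriv Pi x = deriv q x / (1 + q x) ^ 2 := by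
  have hπ' : Pi = fun y => q y / (1 + q y) := funext hπ
  have h1 : HasDerivAt (fun y => 1 + q y) (deriv q x) x := by
    have h := (hasDerivAt_const x (1:ℝ)).add hq.hasDerivAt
    rw [zero_add] at h
    exact h
  have h2 := hq.hasDerivAt.div h1 hne
  rw [hπ', show (fun y => q y / (1 + q y)) = q / (fun y => 1 + q y) from rfl, h2.deriv]
  congr 1
  ring

private lemma f_ineq_aux (A B C a b : ℝ) (hA : 0 ≤ A) (hB : 0 ≤ B) (ha : 0 < a) (hb : 0 < b)
    (hab : a + b = 1) (hC : a * A + b * B < C) :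
    a * (A / (1 + A)) + b * (B / (1 + B)) < C / (1 + C) := by
  have hPA : 0 < 1 + A := by linarith
  have hPB : 0 < 1 + B := by linarith
  have hD : 0 ≤ a * A + b * B := by positivity
  have hPD : 0 < 1 + (a * A + b * B) := by linarith
  have hPC : 0 < 1 + C := by linarith
  have step1 : (a * A + b * B) / (1 + (a * A + b * B)) < C / (1 + C) := by
    rw [div_lt_div_iff₀ hPD hPC]; nlinarith
  have step2 : a * (A / (1 + A)) + b * (B / (1 + B)) ≤
      (a * A + b * B) / (1 + (a * A + b * B)) := by
    rw [← mul_div_assoc, ← mul_div_assoc, div_add_div _ _ hPA.ne' hPB.ne',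
      div_le_div_iff₀ (by positivity) hPD]
    have hb' : b = 1 - a := by linarith
    subst hb'
    nlinarith [mul_nonneg (mul_pos ha hb).le (sq_nonneg (A - B))]
  linarith

theorem pi_satisfies_A1_A2_A3 (q : ℝ → ℝ)
    (hq0 : q 0 = 0) (hq1 : q 1 = 0)
    (hq2 : ∀ u ∈ Set.Icc (0:ℝ) 1, DifferentiableAt ℝ q u ∧ DifferentiableAt ℝ (deriv q) u)
    (hqc : StrictConcaveOn ℝ (Set.Icc (0:ℝ) 1) q)
    (π : ℝ → ℝ) (hπ : ∀ u, π u = q u / (1 + q u)) :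
    π 0 = 0 ∧ π 1 = 0 ∧
    (∀ u ∈ Set.Icc (0:ℝ) 1, DifferentiableAt ℝ π u ∧ DifferentiableAt ℝ (deriv π) u) ∧
    StrictConcaveOn ℝ (Set.Icc (0:ℝ) 1) π := by
  have hmem0 : (0:ℝ) ∈ Set.Icc (0:ℝ) 1 := by constructor <;> norm_num
  have hmem1 : (1:ℝ) ∈ Set.Icc (0:ℝ) 1 := by constructor <;> norm_num
  -- q is positive on the open interval
  have hq_pos : ∀ u : ℝ, 0 < u → u < 1 → 0 < q u := by
    intro u h0 h1
    have := hqc.2 hmem0 hmem1 (by norm_num) (show 0 < 1 - u by linarith) h0 (by ring)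
    simp only [smul_eq_mul, hq0, hq1, mul_zero, mul_one, zero_add, add_zero] at this
    exact this
  have hq_nonneg : ∀ u ∈ Set.Icc (0:ℝ) 1, 0 ≤ q u := by
    intro u hu
    rcases eq_or_lt_of_le hu.1 with h|h
    · rw [← h, hq0]
    rcases eq_or_lt_of_le hu.2 with h'|h'
    · rw [h', hq1]
    exact (hq_pos u h h').le
  have hc : 0 < q (1/2) := hq_pos _ (by norm_num) (by norm_num)
  have hmemh : (1/2:ℝ) ∈ Set.Icc (0:ℝ) 1 := by constructor <;> norm_num
  -- deriv q 0 > 0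
  have hd0 : 0 < deriv q 0 := by
    have h := (hq2 0 hmem0).1.hasDerivAt
    rw [hasDerivAt_iff_tendsto_slope] at h
    have h' : Filter.Tendsto (slope q 0) (nhdsWithin 0 (Set.Ioi 0)) (nhds (deriv q 0)) :=
      h.mono_left (nhdsWithin_mono _ (fun x hx => by
        simp only [Set.mem_compl_iff, Set.mem_singleton_iff]
        exact ne_of_gt hx))
    have hev : ∀ᶠ t in nhdsWithin 0 (Set.Ioi 0), 2 * q (1/2) ≤ slope q 0 t := by
      filter_upwards [Ioo_mem_nhdsGT_of_mem
        (by norm_num : (0:ℝ) ∈ Set.Ico (0:ℝ) (1/2))] with t ht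
      have hqt : 2 * t * q (1/2) ≤ q t := by
        have := hqc.concaveOn.2 hmemh hmem0 (by linarith [ht.1] : (0:ℝ) ≤ 2 * t)
          (by linarith [ht.2] : (0:ℝ) ≤ 1 - 2 * t) (by ring)
        simp only [smul_eq_mul, hq0, mul_zero, add_zero] at this
        have h2 : 2 * t * (1/2 : ℝ) = t := by ring
        rw [h2] at this
        exact this
      rw [slope_def_field, hq0, sub_zero, sub_zero, le_div_iff₀ ht.1]
      linarith
    have := ge_of_tendsto h' hev
    linarith
  -- deriv q 1 < 0
  have hd1 : deriv q 1 < 0 := by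
    have h := (hq2 1 hmem1).1.hasDerivAt
    rw [hasDerivAt_iff_tendsto_slope] at h
    have h' : Filter.Tendsto (slope q 1) (nhdsWithin 1 (Set.Iio 1)) (nhds (deriv q 1)) :=
      h.mono_left (nhdsWithin_mono _ (fun x hx => by
        simp only [Set.mem_compl_iff, Set.mem_singleton_iff]
        exact ne_of_lt hx))
    have hev : ∀ᶠ t in nhdsWithin 1 (Set.Iio 1), slope q 1 t ≤ -(2 * q (1/2)) := by
      filter_upwards [Ioo_mem_nhdsLT_of_mem
        (by norm_num : (1:ℝ) ∈ Set.Ioc (1/2 : ℝ) 1)] with t ht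
      have hqt : 2 * (1 - t) * q (1/2) ≤ q t := by
        have := hqc.concaveOn.2 hmemh hmem1 (by linarith [ht.2] : (0:ℝ) ≤ 2 * (1 - t))
          (by linarith [ht.1] : (0:ℝ) ≤ 2 * t - 1) (by ring)
        simp only [smul_eq_mul, hq1, mul_zero, mul_one, add_zero] at this
        have h2 : 2 * (1 - t) * (1/2 : ℝ) + (2 * t - 1) = t := by ring
        rw [h2] at this
        linarith
      rw [slope_def_field, hq1, sub_zero]
      rw [div_le_iff_of_neg (by linarith [ht.2] : t - 1 < 0)]
      nlinarith
    have := le_of_tendsto h' hev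
    linarith
  refine ⟨by rw [hπ 0, hq0]; norm_num, by rw [hπ 1, hq1]; norm_num, ?_, ?_⟩
  · -- twice differentiability
    intro u hu
    have hdq := (hq2 u hu).1
    have h1q : 0 < 1 + q u := by linarith [hq_nonneg u hu]
    have hπ' : π = fun y => q y / (1 + q y) := funext hπ
    have hdiffπ : DifferentiableAt ℝ π u := by
      rw [hπ']
      exact hdq.div ((differentiableAt_const _).add hdq) h1q.ne'
    refine ⟨hdiffπ, ?_⟩
    have hev2 : ∀ᶠ x in nhds u, 1 + q x ≠ 0 := by
      have hcq : Filter.Tendsto q (nhds u) (nhds (q u)) := hdq.continuousAt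
      filter_upwards [hcq (Ioi_mem_nhds (show (-1:ℝ) < q u by linarith))] with x hx
      have : (-1:ℝ) < q x := hx
      linarith
    have hev1 : ∀ᶠ x in nhds u, DifferentiableAt ℝ q x := by
      by_cases hu0 : u = 0
      · subst hu0
        have hc0 : ContinuousAt (deriv q) 0 := (hq2 0 hmem0).2.continuousAt
        filter_upwards [hc0.eventually_ne hd0.ne'] with x hx
        by_contra hnd
        exact hx (deriv_zero_of_not_differentiableAt hnd)
      by_cases hu1 : u = 1
      · subst hu1
        have hc1 : ContinuousAt (deriv q) 1 := (hq2 1 hmem1).2.continuousAt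
        filter_upwards [hc1.eventually_ne hd1.ne] with x hx
        by_contra hnd
        exact hx (deriv_zero_of_not_differentiableAt hnd)
      · have h0 : 0 < u := lt_of_le_of_ne hu.1 (Ne.symm hu0)
        have h1 : u < 1 := lt_of_le_of_ne hu.2 hu1
        filter_upwards [Ioo_mem_nhds h0 h1] with x hx
        exact (hq2 x ⟨hx.1.le, hx.2.le⟩).1
    have heq : deriv π =ᶠ[nhds u] fun x => deriv q x / (1 + q x) ^ 2 := by
      filter_upwards [hev1, hev2] with x hx1 hx2
      exact deriv_pi_eq_aux q π hπ x hx1 hx2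
    have hg : DifferentiableAt ℝ (fun x => deriv q x / (1 + q x) ^ 2) u :=
      (hq2 u hu).2.div (((differentiableAt_const _).add hdq).pow 2) (pow_ne_zero 2 h1q.ne')
    exact hg.congr_of_eventuallyEq heq
  · -- strict concavity
    refine ⟨convex_Icc 0 1, ?_⟩
    intro x hx y hy hxy a b ha hb hab
    have hC := hqc.2 hx hy hxy ha hb hab
    simp only [smul_eq_mul] at hC ⊢
    rw [hπ, hπ, hπ]
    exact f_ineq_aux (q x) (q y) (q (a * x + b * y)) a b (hq_nonneg x hx) (hq_nonneg y hy)
      ha hb hab hC
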